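/- For all n ∈ ℕ, all i with 0 ≤ i ≤ 2^n - 1 and gcd(i, 2^n) ≤ 2^{n-2}, and all choices x, y_0, y_1 ∈ {t_n, t̄_n}, the similarity density SD(x, (y_0 y_1)[i .. i + 2^n - 1]) lies in [1/4, 3/4]. -/

import Mathlib

def mu (l : List ℕ) : List ℕ := l.flatMap (fun b => [b, 1 - b])
def tWord (n : ℕ) : List ℕ := mu^[n] [0]
def comp (l : List ℕ) : List ℕ := l.map (fun b => 1 - b)

/-- Similarity density of two finite words (of the same length). -/
noncomputable def SD (x y : List ℕ) : ℝ :=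
  (List.zipWith (fun a b => if a = b then (1 : ℝ) else 0) x y).sum / x.length


noncomputable def e (k : ℕ) : ℤ := (-1) ^ (Nat.digits 2 k).sum

lemma e_zero : e 0 = 1 := by simp [e]

lemma e_two_mul (k : ℕ) : e (2 * k) = e k := by
  rcases Nat.eq_zero_or_pos k with h | h
  · simp [h]
  · unfold e
    rw [Nat.digits_def' (by norm_num) (by omega)]
    simp [Nat.mul_div_cancel_left _ (by norm_num : 0 < 2), Nat.mul_mod_right]

lemma e_two_mul_add_one (k : ℕ) : e (2 * k + 1) = -e k := by
  unfold e
  rw [Nat.digits_def' (by norm_num) (by omega)]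
  have h1 : (2 * k + 1) % 2 = 1 := by omega
  have h2 : (2 * k + 1) / 2 = k := by omega
  rw [h1, h2]
  simp [pow_succ, pow_add]

lemma e_abs (k : ℕ) : |e k| = 1 := by
  unfold e
  rw [abs_pow]
  simp

lemma e_flip : ∀ n : ℕ, ∀ r < 2 ^ n, e (2 ^ n + r) = -e r := by
  intro n
  induction n with
  | zero => intro r hr; interval_cases r; simp [e, e_zero]
  | succ n ih =>
    intro r hr
    rcases Nat.even_or_odd r with ⟨k, hk⟩ | ⟨k, hk⟩
    · have : 2 ^ (n+1) + r = 2 * (2 ^ n + k) := by rw [pow_succ]; omega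
      rw [this, e_two_mul, ih k (by omega), hk]
      rw [(by ring : k + k = 2 * k), e_two_mul]
      
    · have : 2 ^ (n+1) + r = 2 * (2 ^ n + k) + 1 := by rw [pow_succ]; omega
      rw [this, e_two_mul_add_one, ih k (by omega), hk, e_two_mul_add_one]

noncomputable def Nc (n i : ℕ) : ℤ := ∑ j ∈ Finset.range (2 ^ n), e j * e (i + j)

noncomputable def Cc (n i : ℕ) : ℤ :=
  ∑ j ∈ Finset.range (2 ^ n), e j * (if i + j < 2 ^ n then e (i + j) else -e (i + j))

lemma sum_range_double (f : ℕ → ℤ) (m : ℕ) :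
    ∑ j ∈ Finset.range (2 * m), f j
      = ∑ k ∈ Finset.range m, (f (2 * k) + f (2 * k + 1)) := by
  induction m with
  | zero => simp
  | succ m ih =>
    rw [Finset.sum_range_succ, ← ih, (by ring : 2 * (m + 1) = 2 * m + 1 + 1),
      Finset.sum_range_succ, Finset.sum_range_succ]
    ring_nf

lemma Nc_even (n i : ℕ) : Nc (n + 1) (2 * i) = 2 * Nc n i := by
  unfold Nc
  rw [pow_succ, mul_comm (2 ^ n) 2, sum_range_double, Finset.mul_sum]
  refine Finset.sum_congr rfl fun k _ => ?_
  rw [e_two_mul, e_two_mul_add_one, (by ring : 2 * i + 2 * k = 2 * (i + k)),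
    (by ring : 2 * i + (2 * k + 1) = 2 * (i + k) + 1), e_two_mul, e_two_mul_add_one]
  ring

lemma Nc_odd (n i : ℕ) : Nc (n + 1) (2 * i + 1) = -(Nc n i + Nc n (i + 1)) := by
  unfold Nc
  rw [pow_succ, mul_comm (2 ^ n) 2, sum_range_double, ← Finset.sum_add_distrib, ← Finset.sum_neg_distrib]
  refine Finset.sum_congr rfl fun k _ => ?_
  rw [e_two_mul, e_two_mul_add_one, (by ring : 2 * i + 1 + 2 * k = 2 * (i + k) + 1),
    (by ring : 2 * i + 1 + (2 * k + 1) = 2 * (i + 1 + k)), e_two_mul, e_two_mul_add_one]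
  ring

lemma Cc_even (n i : ℕ) : Cc (n + 1) (2 * i) = 2 * Cc n i := by
  unfold Cc
  rw [pow_succ, mul_comm (2 ^ n) 2, sum_range_double, Finset.mul_sum]
  refine Finset.sum_congr rfl fun k _ => ?_
  have e1 : e (2 * i + 2 * k) = e (i + k) := by
    rw [(by ring : 2 * i + 2 * k = 2 * (i + k)), e_two_mul]
  have e2 : e (2 * i + (2 * k + 1)) = -e (i + k) := by
    rw [(by ring : 2 * i + (2 * k + 1) = 2 * (i + k) + 1), e_two_mul_add_one]
  rw [e_two_mul, e_two_mul_add_one]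
  by_cases h : i + k < 2 ^ n
  · rw [if_pos (by omega), if_pos (by omega), if_pos h, e1, e2]; ring
  · rw [if_neg (by omega), if_neg (by omega), if_neg h, e1, e2]; ring

lemma Cc_odd (n i : ℕ) : Cc (n + 1) (2 * i + 1) = -(Cc n i + Cc n (i + 1)) := by
  unfold Cc
  rw [pow_succ, mul_comm (2 ^ n) 2, sum_range_double, ← Finset.sum_add_distrib,
    ← Finset.sum_neg_distrib]
  refine Finset.sum_congr rfl fun k _ => ?_
  have e1 : e (2 * i + 1 + 2 * k) = -e (i + k) := by
    rw [(by ring : 2 * i + 1 + 2 * k = 2 * (i + k) + 1), e_two_mul_add_one]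
  have e2 : e (2 * i + 1 + (2 * k + 1)) = e (i + 1 + k) := by
    rw [(by ring : 2 * i + 1 + (2 * k + 1) = 2 * (i + 1 + k)), e_two_mul]
  rw [e_two_mul, e_two_mul_add_one]
  by_cases h : i + k < 2 ^ n <;> by_cases h2 : i + 1 + k < 2 ^ n
  · rw [if_pos (by omega), if_pos (by omega), if_pos h, if_pos h2, e1, e2]; ring
  · rw [if_pos (by omega), if_neg (by omega), if_pos h, if_neg h2, e1, e2]; ring
  · rw [if_neg (by omega), if_pos (by omega), if_neg h, if_pos h2, e1, e2]; ring
  · rw [if_neg (by omega), if_neg (by omega), if_neg h, if_neg h2, e1, e2]; ring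

lemma Nc_abs_le (n i : ℕ) : |Nc n i| ≤ 2 ^ n := by
  unfold Nc
  calc |∑ j ∈ Finset.range (2 ^ n), e j * e (i + j)|
      ≤ ∑ j ∈ Finset.range (2 ^ n), |e j * e (i + j)| := Finset.abs_sum_le_sum_abs _ _
    _ = ∑ j ∈ Finset.range (2 ^ n), 1 := by
        refine Finset.sum_congr rfl fun j _ => ?_
        rw [abs_mul, e_abs, e_abs]; norm_num
    _ = 2 ^ n := by simp

lemma Cc_abs_le (n i : ℕ) : |Cc n i| ≤ 2 ^ n := by
  unfold Cc
  calc |∑ j ∈ Finset.range (2 ^ n), e j * (if i + j < 2 ^ n then e (i + j) else -e (i + j))|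
      ≤ ∑ j ∈ Finset.range (2 ^ n), |e j * (if i + j < 2 ^ n then e (i + j) else -e (i + j))| :=
        Finset.abs_sum_le_sum_abs _ _
    _ = ∑ j ∈ Finset.range (2 ^ n), 1 := by
        refine Finset.sum_congr rfl fun j _ => ?_
        rw [abs_mul, e_abs]
        by_cases h : i + j < 2 ^ n
        · rw [if_pos h, e_abs]; norm_num
        · rw [if_neg h, abs_neg, e_abs]; norm_num
    _ = 2 ^ n := by simp

lemma Nc_pair (n i : ℕ) : |Nc (n + 1) i + Nc (n + 1) (i + 1)| ≤ 2 ^ (n + 1) := by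
  rcases Nat.even_or_odd i with ⟨k, hk⟩ | ⟨k, hk⟩
  · have h1 : i = 2 * k := by omega
    have h2 : i + 1 = 2 * k + 1 := by omega
    rw [h1, Nc_even, Nc_odd]
    have := Nc_abs_le n k
    have := Nc_abs_le n (k + 1)
    rw [pow_succ]
    have : |2 * Nc n k + -(Nc n k + Nc n (k + 1))| = |Nc n k - Nc n (k + 1)| := by ring_nf
    rw [this]
    calc |Nc n k - Nc n (k + 1)| ≤ |Nc n k| + |Nc n (k + 1)| := abs_sub _ _
      _ ≤ 2 ^ n + 2 ^ n := add_le_add (Nc_abs_le n k) (Nc_abs_le n (k+1))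
      _ = 2 ^ n * 2 := by ring
  · have h1 : i = 2 * k + 1 := by omega
    have h2 : i + 1 = 2 * (k + 1) := by omega
    rw [h1, (by ring : 2*k+1+1 = 2*(k+1)), Nc_odd, Nc_even]
    rw [pow_succ]
    have : |-(Nc n k + Nc n (k + 1)) + 2 * Nc n (k + 1)| = |Nc n (k + 1) - Nc n k| := by ring_nf
    rw [this]
    calc |Nc n (k + 1) - Nc n k| ≤ |Nc n (k + 1)| + |Nc n k| := abs_sub _ _
      _ ≤ 2 ^ n + 2 ^ n := add_le_add (Nc_abs_le n (k+1)) (Nc_abs_le n k)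
      _ = 2 ^ n * 2 := by ring

lemma Cc_pair (n i : ℕ) : |Cc (n + 1) i + Cc (n + 1) (i + 1)| ≤ 2 ^ (n + 1) := by
  rcases Nat.even_or_odd i with ⟨k, hk⟩ | ⟨k, hk⟩
  · have h1 : i = 2 * k := by omega
    have h2 : i + 1 = 2 * k + 1 := by omega
    rw [h1, Cc_even, Cc_odd, pow_succ]
    have : |2 * Cc n k + -(Cc n k + Cc n (k + 1))| = |Cc n k - Cc n (k + 1)| := by ring_nf
    rw [this]
    calc |Cc n k - Cc n (k + 1)| ≤ |Cc n k| + |Cc n (k + 1)| := abs_sub _ _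
      _ ≤ 2 ^ n + 2 ^ n := add_le_add (Cc_abs_le n k) (Cc_abs_le n (k+1))
      _ = 2 ^ n * 2 := by ring
  · have h1 : i = 2 * k + 1 := by omega
    have h2 : i + 1 = 2 * (k + 1) := by omega
    rw [h1, (by ring : 2*k+1+1 = 2*(k+1)), Cc_odd, Cc_even, pow_succ]
    have : |-(Cc n k + Cc n (k + 1)) + 2 * Cc n (k + 1)| = |Cc n (k + 1) - Cc n k| := by ring_nf
    rw [this]
    calc |Cc n (k + 1) - Cc n k| ≤ |Cc n (k + 1)| + |Cc n k| := abs_sub _ _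
      _ ≤ 2 ^ n + 2 ^ n := add_le_add (Cc_abs_le n (k+1)) (Cc_abs_le n k)
      _ = 2 ^ n * 2 := by ring

lemma Nc_main : ∀ n i : ℕ, ¬ (2 ^ n ∣ i) → |Nc (n + 1) i| ≤ 2 ^ n := by
  intro n
  induction n with
  | zero => intro i hi; exact absurd (one_dvd i) (by simpa using hi)
  | succ n ih =>
    intro i hi
    rcases Nat.even_or_odd i with ⟨k, hk⟩ | ⟨k, hk⟩
    · have h1 : i = 2 * k := by omega
      have hk' : ¬ (2 ^ n ∣ k) := by
        intro ⟨c, hc⟩; exact hi ⟨c, by rw [h1, hc, pow_succ]; ring⟩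
      rw [h1, Nc_even, abs_mul, pow_succ, mul_comm (2 ^ n : ℤ) 2]
      have : |(2:ℤ)| = 2 := by norm_num
      rw [this]
      exact mul_le_mul_of_nonneg_left (ih k hk') (by norm_num)
    · have h1 : i = 2 * k + 1 := by omega
      rw [h1, Nc_odd, abs_neg]
      exact Nc_pair n k

lemma Cc_main : ∀ n i : ℕ, ¬ (2 ^ n ∣ i) → |Cc (n + 1) i| ≤ 2 ^ n := by
  intro n
  induction n with
  | zero => intro i hi; exact absurd (one_dvd i) (by simpa using hi)
  | succ n ih =>
    intro i hi
    rcases Nat.even_or_odd i with ⟨k, hk⟩ | ⟨k, hk⟩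
    · have h1 : i = 2 * k := by omega
      have hk' : ¬ (2 ^ n ∣ k) := by
        intro ⟨c, hc⟩; exact hi ⟨c, by rw [h1, hc, pow_succ]; ring⟩
      rw [h1, Cc_even, abs_mul, pow_succ, mul_comm (2 ^ n : ℤ) 2]
      have : |(2:ℤ)| = 2 := by norm_num
      rw [this]
      exact mul_le_mul_of_nonneg_left (ih k hk') (by norm_num)
    · have h1 : i = 2 * k + 1 := by omega
      rw [h1, Cc_odd, abs_neg]
      exact Cc_pair n k

lemma mu_append (a b : List ℕ) : mu (a ++ b) = mu a ++ mu b :=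
  List.flatMap_append ..

lemma length_mu (l : List ℕ) : (mu l).length = 2 * l.length := by
  induction l with
  | nil => simp [mu]
  | cons a l ih => simp [mu] at ih ⊢; omega

lemma tWord_length (n : ℕ) : (tWord n).length = 2 ^ n := by
  induction n with
  | zero => simp [tWord]
  | succ n ih =>
    unfold tWord at ih ⊢
    rw [Function.iterate_succ_apply', length_mu, ih, pow_succ]
    ring

lemma comp_length (l : List ℕ) : (comp l).length = l.length := by simp [comp]

def Bin (l : List ℕ) : Prop := ∀ b ∈ l, b ≤ 1

lemma bin_mu {l : List ℕ} (h : Bin l) : Bin (mu l) := by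
  intro b hb
  simp [mu, List.mem_flatMap] at hb
  obtain ⟨a, ha, hb⟩ := hb
  have := h a ha
  omega

lemma bin_tWord (n : ℕ) : Bin (tWord n) := by
  induction n with
  | zero => intro b hb; simp [tWord] at hb; omega
  | succ n ih =>
    unfold tWord at ih ⊢
    rw [Function.iterate_succ_apply']
    exact bin_mu ih

lemma mu_comp {l : List ℕ} (h : Bin l) : mu (comp l) = comp (mu l) := by
  induction l with
  | nil => simp [mu, comp]
  | cons a l ih =>
    have ha : a ≤ 1 := h a (by simp)
    have h' : Bin l := fun b hb => h b (by simp [hb])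
    simp only [comp, mu, List.map_cons, List.flatMap_cons, List.map_append] at ih ⊢
    rw [ih h']; simp

lemma iter_mu_append (n : ℕ) : ∀ a b : List ℕ, mu^[n] (a ++ b) = mu^[n] a ++ mu^[n] b := by
  induction n with
  | zero => simp
  | succ n ih =>
    intro a b
    rw [Function.iterate_succ_apply, Function.iterate_succ_apply, Function.iterate_succ_apply,
      mu_append, ih]

lemma iter_mu_bin (n : ℕ) : ∀ l : List ℕ, Bin l → Bin (mu^[n] l) := by
  induction n with
  | zero => simp
  | succ n ih =>
    intro l hl
    rw [Function.iterate_succ_apply]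
    exact ih _ (bin_mu hl)

lemma iter_mu_comp (n : ℕ) : ∀ l : List ℕ, Bin l → mu^[n] (comp l) = comp (mu^[n] l) := by
  induction n with
  | zero => simp
  | succ n ih =>
    intro l hl
    rw [Function.iterate_succ_apply, Function.iterate_succ_apply, mu_comp hl, ih _ (bin_mu hl)]

lemma tWord_succ (n : ℕ) : tWord (n + 1) = tWord n ++ comp (tWord n) := by
  unfold tWord
  rw [Function.iterate_succ_apply]
  have h1 : mu [0] = [0] ++ comp [0] := by simp [mu, comp]
  rw [h1, iter_mu_append, iter_mu_comp n [0] (by intro b hb; simp at hb; omega)]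

lemma comp_getD (l : List ℕ) (m : ℕ) (h : m < l.length) :
    (comp l).getD m 0 = 1 - l.getD m 0 := by
  rw [List.getD_eq_getElem _ _ (by simpa [comp] using h), List.getD_eq_getElem _ _ h]
  exact List.getElem_map _

lemma tWord_getD_le (n m : ℕ) : (tWord n).getD m 0 ≤ 1 := by
  rcases lt_or_ge m (tWord n).length with h | h
  · rw [List.getD_eq_getElem _ _ h]; exact bin_tWord n _ (List.getElem_mem _)
  · rw [List.getD_eq_default _ _ h]; norm_num

lemma tval : ∀ n, ∀ m, m < 2 ^ n → (1 : ℤ) - 2 * ((tWord n).getD m 0 : ℤ) = e m := by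
  intro n
  induction n with
  | zero =>
    intro m hm
    interval_cases m
    simp [tWord, e_zero]
  | succ n ih =>
    intro m hm
    have hlen : (tWord n).length = 2 ^ n := tWord_length n
    rw [tWord_succ]
    by_cases h : m < 2 ^ n
    · rw [List.getD_append _ _ _ _ (by omega)]
      exact ih m h
    · have hr : m - 2 ^ n < 2 ^ n := by rw [pow_succ] at hm; omega
      rw [List.getD_append_right _ _ _ _ (by omega), hlen,
        comp_getD _ _ (by rw [tWord_length]; exact hr)]
      have hb : (tWord n).getD (m - 2 ^ n) 0 ≤ 1 := tWord_getD_le n (m - 2 ^ n)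
      have hih := ih (m - 2 ^ n) hr
      have hm' : m = 2 ^ n + (m - 2 ^ n) := by omega
      rw [hm', e_flip n _ (by omega)]
      rw [Nat.add_sub_cancel_left, Nat.cast_sub hb]
      push_cast
      linarith

lemma bin_getD {l : List ℕ} (h : Bin l) (m : ℕ) : l.getD m 0 ≤ 1 := by
  rcases lt_or_ge m l.length with hm | hm
  · rw [List.getD_eq_getElem _ _ hm]; exact h _ (List.getElem_mem _)
  · rw [List.getD_eq_default _ _ hm]; norm_num

lemma zip_sum (f : ℕ → ℕ → ℝ) : ∀ x w : List ℕ,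
    (List.zipWith f x w).sum
      = ∑ j ∈ Finset.range (min x.length w.length), f (x.getD j 0) (w.getD j 0) := by
  intro x
  induction x with
  | nil => intro w; simp
  | cons a x ih =>
    intro w
    cases w with
    | nil => simp
    | cons b w =>
      simp only [List.zipWith_cons_cons, List.sum_cons, List.length_cons]
      rw [ih w, Nat.succ_min_succ, Finset.sum_range_succ']
      simp only [List.getD_cons_succ, List.getD_cons_zero]
      ring

lemma window_getD (l : List ℕ) (i k j : ℕ) (hj : j < k) (hlen : i + k ≤ l.length) :
    ((l.drop i).take k).getD j 0 = l.getD (i + j) 0 := by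
  have h1 : j < (l.drop i).length := by rw [List.length_drop]; omega
  rw [List.getD_eq_getElem _ _ (by rw [List.length_take]; exact lt_min hj h1),
      List.getD_eq_getElem _ _ (by omega : i + j < l.length)]
  rw [List.getElem_take, List.getElem_drop]

lemma sign_spec {y : List ℕ} (n : ℕ) (hy : y = tWord n ∨ y = comp (tWord n)) :
    ∃ s : ℤ, (s = 1 ∨ s = -1) ∧ y.length = 2 ^ n ∧ Bin y ∧
      ∀ m < 2 ^ n, (1 : ℤ) - 2 * (y.getD m 0 : ℤ) = s * e m := by
  rcases hy with rfl | rfl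
  · exact ⟨1, Or.inl rfl, tWord_length n, bin_tWord n,
      fun m hm => by rw [one_mul]; exact tval n m hm⟩
  · refine ⟨-1, Or.inr rfl, by rw [comp_length, tWord_length], ?_, fun m hm => ?_⟩
    · intro b hb
      simp only [comp, List.mem_map] at hb
      obtain ⟨a, _, ha⟩ := hb
      omega
    · rw [comp_getD _ _ (by rw [tWord_length]; exact hm)]
      have hb := tWord_getD_le n m
      rw [Nat.cast_sub hb]
      have := tval n m hm
      push_cast
      linarith

theorem technical_finite (n i : ℕ) (hi : i ≤ 2 ^ n - 1)
    (hg : 4 * Nat.gcd i (2 ^ n) ≤ 2 ^ n)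
    (x y0 y1 : List ℕ)
    (hx : x = tWord n ∨ x = comp (tWord n))
    (hy0 : y0 = tWord n ∨ y0 = comp (tWord n))
    (hy1 : y1 = tWord n ∨ y1 = comp (tWord n)) :
    SD x (((y0 ++ y1).drop i).take (2 ^ n)) ∈ Set.Icc (1/4 : ℝ) (3/4) := by
  have hpos : (0:ℕ) < 2 ^ n := Nat.pow_pos (by norm_num)
  have hgcdpos : 0 < Nat.gcd i (2 ^ n) := Nat.gcd_pos_of_pos_right i hpos
  have h4 : 4 ≤ 2 ^ n := le_trans (by omega) hg
  have hn2 : 2 ≤ n := by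
    by_contra h
    have : 2 ^ n ≤ 2 ^ 1 := Nat.pow_le_pow_right (by norm_num) (by omega)
    norm_num at this; omega
  have hhalf : 2 ^ n = 2 * 2 ^ (n - 1) := by
    rw [← pow_succ']; congr 1; omega
  have hndvd : ¬ (2 ^ (n - 1) ∣ i) := by
    intro hdvd
    have hi0 : i ≠ 0 := by
      rintro rfl
      rw [Nat.gcd_zero_left] at hg; omega
    have hdvd2 : 2 ^ (n-1) ∣ Nat.gcd i (2 ^ n) :=
      Nat.dvd_gcd hdvd (pow_dvd_pow 2 (by omega))
    have := Nat.le_of_dvd hgcdpos hdvd2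
    omega
  have hC : |Cc n i| ≤ 2 ^ (n - 1) := by
    have := Cc_main (n - 1) i hndvd
    rwa [(by omega : n - 1 + 1 = n)] at this
  have hN : |Nc n i| ≤ 2 ^ (n - 1) := by
    have := Nc_main (n - 1) i hndvd
    rwa [(by omega : n - 1 + 1 = n)] at this
  obtain ⟨sx, hsx1, hxlen, hxbin, hsx⟩ := sign_spec n hx
  obtain ⟨s0, hs01, h0len, h0bin, hs0⟩ := sign_spec n hy0
  obtain ⟨s1, hs11, h1len, h1bin, hs1⟩ := sign_spec n hy1
  set w := ((y0 ++ y1).drop i).take (2 ^ n) with hw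
  have hcatlen : (y0 ++ y1).length = 2 ^ n + 2 ^ n := by
    rw [List.length_append, h0len, h1len]
  have hwlen : w.length = 2 ^ n := by
    rw [hw, List.length_take, List.length_drop, hcatlen]; omega
  have hwget : ∀ j < 2 ^ n, w.getD j 0 = (y0 ++ y1).getD (i + j) 0 := fun j hj =>
    window_getD _ _ _ _ hj (by omega)
  have hwval : ∀ j < 2 ^ n, (1:ℤ) - 2 * (w.getD j 0 : ℤ)
      = (if i + j < 2 ^ n then s0 else -s1) * e (i + j) := by
    intro j hj
    rw [hwget j hj]
    by_cases hij : i + j < 2 ^ n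
    · rw [if_pos hij, List.getD_append _ _ _ _ (by omega)]
      exact hs0 _ hij
    · have hr : i + j - 2 ^ n < 2 ^ n := by omega
      rw [if_neg hij, List.getD_append_right _ _ _ _ (by omega), h0len, hs1 _ hr]
      have heq : e (i + j) = -e (i + j - 2 ^ n) := by
        conv_lhs => rw [(by omega : i + j = 2 ^ n + (i + j - 2 ^ n))]
        rw [e_flip n _ hr]
      rw [heq]; ring
  have hwbin : Bin w := by
    intro b hb
    have hb2 : b ∈ y0 ++ y1 := List.mem_of_mem_drop (List.mem_of_mem_take hb)
    rcases List.mem_append.1 hb2 with h | h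
    exacts [h0bin b h, h1bin b h]
  have hmin : min x.length w.length = 2 ^ n := by rw [hxlen, hwlen, min_self]
  set T : ℤ := ∑ j ∈ Finset.range (2 ^ n),
    (1 - 2 * (x.getD j 0 : ℤ)) * (1 - 2 * (w.getD j 0 : ℤ)) with hTdef
  have hsum : (List.zipWith (fun a b => if a = b then (1:ℝ) else 0) x w).sum
      = ((2:ℝ) ^ n + (T : ℝ)) / 2 := by
    rw [zip_sum, hmin]
    have hpt : ∀ j ∈ Finset.range (2 ^ n),
        (if x.getD j 0 = w.getD j 0 then (1:ℝ) else 0)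
          = (1 + (((1 - 2 * (x.getD j 0 : ℤ)) * (1 - 2 * (w.getD j 0 : ℤ)) : ℤ) : ℝ)) / 2 := by
      intro j _
      have hp : x.getD j 0 ≤ 1 := bin_getD hxbin j
      have hq : w.getD j 0 ≤ 1 := bin_getD hwbin j
      set p := x.getD j 0
      set q := w.getD j 0
      interval_cases p <;> interval_cases q <;> norm_num
    rw [Finset.sum_congr rfl hpt, ← Finset.sum_div, hTdef]
    push_cast
    rw [Finset.sum_add_distrib]
    simp
  have hcase : s1 = s0 ∨ -s1 = s0 := by
    rcases hs01 with rfl | rfl <;> rcases hs11 with rfl | rfl <;> norm_num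
  have hT : |T| ≤ 2 ^ (n - 1) := by
    rcases hcase with hc | hc
    · have hTeq : T = sx * s0 * Cc n i := by
        rw [hTdef]
        unfold Cc
        rw [Finset.mul_sum]
        refine Finset.sum_congr rfl fun j hj => ?_
        simp only [Finset.mem_range] at hj
        rw [hsx j hj, hwval j hj]
        by_cases hij : i + j < 2 ^ n
        · rw [if_pos hij, if_pos hij]; ring
        · rw [if_neg hij, if_neg hij, ← hc]; ring
      rw [hTeq, abs_mul, abs_mul]
      rcases hsx1 with rfl | rfl <;> rcases hs01 with rfl | rfl <;>
        simpa using hC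
    · have hTeq : T = sx * s0 * Nc n i := by
        rw [hTdef]
        unfold Nc
        rw [Finset.mul_sum]
        refine Finset.sum_congr rfl fun j hj => ?_
        simp only [Finset.mem_range] at hj
        rw [hsx j hj, hwval j hj]
        by_cases hij : i + j < 2 ^ n
        · rw [if_pos hij, ← hc]; ring
        · rw [if_neg hij, ← hc]; ring
      rw [hTeq, abs_mul, abs_mul]
      rcases hsx1 with rfl | rfl <;> rcases hs01 with rfl | rfl <;>
        simpa using hN
  -- final arithmetic
  have hTR : |(T:ℝ)| ≤ (2:ℝ) ^ n / 2 := by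
    have h1 : ((2:ℤ) ^ (n-1) : ℝ) = (2:ℝ) ^ n / 2 := by
      have h2 : (2:ℝ) ^ n = 2 ^ (n-1) * 2 := by
        rw [← pow_succ, (by omega : n - 1 + 1 = n)]
      push_cast
      rw [h2]
      ring
    rw [← h1]
    calc |(T:ℝ)| = ((|T| : ℤ) : ℝ) := by push_cast; rfl
      _ ≤ ((2:ℤ) ^ (n-1) : ℝ) := by exact_mod_cast hT
  have hPpos : (0:ℝ) < (2:ℝ) ^ n := by positivity
  rw [SD, hsum, hxlen]
  have hb := abs_le.1 hTR
  constructor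
  · rw [le_div_iff₀ (by exact_mod_cast hpos)]
    push_cast
    nlinarith [hb.1]
  · rw [div_le_iff₀ (by exact_mod_cast hpos)]
    push_cast
    nlinarith [hb.2]
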